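/- (Restricted Ackermann Lemma for descriptive frames) Let F = (W, R, 𝕎) be a descriptive frame or a Kripke frame (𝕎 = 𝒫(W)). Let A be a syntactically closed ML⁺-formula not containing p, and B(p) a syntactically open ML⁺-formula downwards monotone in p, with variables among q₁,…,qₙ,p and nominals among i₁,…,i_m. Then for all admissible Q₁,…,Qₙ ∈ 𝕎 and x₁,…,x_m ∈ W: B(A) = W (i.e., the extension of B with A substituted for p is all of W) if and only if there exists an admissible set P ∈ 𝕎 with A ⊆ P and B(P) = W (extensions computed with parameters Q₁,…,Qₙ,{x₁},…,{x_m}). -/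

import Mathlib

/-- The diamond set operator: `◇A = {w : ∃v, R w v ∧ v ∈ A}`. -/
def diaOp {W : Type} (R : W → W → Prop) (A : Set W) : Set W := {w | ∃ v, R w v ∧ v ∈ A}

/-- The box set operator: `□A = {w : ∀v, R w v → v ∈ A}`. -/
def boxOp {W : Type} (R : W → W → Prop) (A : Set W) : Set W := {w | ∀ v, R w v → v ∈ A}

/-- The inverse diamond set operator: `◇⁻¹A = {w : ∃v ∈ A, R v w} = R(A)`. -/
def idiaOp {W : Type} (R : W → W → Prop) (A : Set W) : Set W := {w | ∃ v, R v w ∧ v ∈ A}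

/-- The inverse box set operator: `□⁻¹A = {w : ∀v, R v w → v ∈ A}`. -/
def iboxOp {W : Type} (R : W → W → Prop) (A : Set W) : Set W := {w | ∀ v, R v w → v ∈ A}
/-- A general frame: a Kripke frame together with a Boolean algebra of
admissible subsets closed under the diamond operator. -/
structure GenFrame (W : Type) where
  R : W → W → Prop
  adm : Set (Set W)
  univ_mem : Set.univ ∈ adm
  compl_mem : ∀ X ∈ adm, Xᶜ ∈ adm
  inter_mem : ∀ X ∈ adm, ∀ Y ∈ adm, X ∩ Y ∈ adm
  dia_mem : ∀ X ∈ adm, diaOp R X ∈ adm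

/-- The topology generated by the admissible sets as a base of clopen sets. -/
def GenFrame.top {W : Type} (F : GenFrame W) : TopologicalSpace W :=
  TopologicalSpace.generateFrom F.adm

/-- Differentiated: distinct points are separated by admissible sets. -/
def GenFrame.differentiated {W : Type} (F : GenFrame W) : Prop :=
  ∀ x y : W, x ≠ y → ∃ X ∈ F.adm, x ∈ X ∧ y ∉ X

/-- Tight: `R x y` iff `x ∈ ◇Y` for every admissible `Y` containing `y`. -/
def GenFrame.tight {W : Type} (F : GenFrame W) : Prop :=
  ∀ x y : W, F.R x y ↔ ∀ Y ∈ F.adm, y ∈ Y → x ∈ diaOp F.R Y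

/-- Compact: every family of admissible sets with the finite intersection
property has nonempty intersection. -/
def GenFrame.cpt {W : Type} (F : GenFrame W) : Prop :=
  ∀ C : Set (Set W), C ⊆ F.adm →
    (∀ D : Set (Set W), D ⊆ C → D.Finite → (⋂₀ D).Nonempty) →
    (⋂₀ C).Nonempty

/-- A descriptive frame is a differentiated, tight and compact general frame. -/
def GenFrame.descriptive {W : Type} (F : GenFrame W) : Prop :=
  F.differentiated ∧ F.tight ∧ F.cpt
/-- Formulas of the extended modal language ML⁺, with nominals and the
inverse modalities `◇⁻¹` (`idia`) and `□⁻¹` (`ibox`). -/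
inductive MFp : Type where
  | bot
  | top
  | var (p : Nat)
  | nom (k : Nat)
  | neg (φ : MFp)
  | or (φ ψ : MFp)
  | and (φ ψ : MFp)
  | dia (φ : MFp)
  | box (φ : MFp)
  | idia (φ : MFp)
  | ibox (φ : MFp)

def MFp.imp (φ ψ : MFp) : MFp := MFp.or (MFp.neg φ) ψ

/-- Satisfaction for ML⁺: `V` interprets propositional variables,
`g` assigns a world (i.e. a singleton) to each nominal. -/
def satp {W : Type} (R : W → W → Prop) (V : Nat → Set W) (g : Nat → W) : MFp → W → Prop
  | .bot, _ => False
  | .top, _ => True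
  | .var p, w => w ∈ V p
  | .nom k, w => w = g k
  | .neg φ, w => ¬ satp R V g φ w
  | .or φ ψ, w => satp R V g φ w ∨ satp R V g ψ w
  | .and φ ψ, w => satp R V g φ w ∧ satp R V g ψ w
  | .dia φ, w => ∃ v, R w v ∧ satp R V g φ v
  | .box φ, w => ∀ v, R w v → satp R V g φ v
  | .idia φ, w => ∃ v, R v w ∧ satp R V g φ v
  | .ibox φ, w => ∀ v, R v w → satp R V g φ v
mutual
/-- Syntactically closed: all occurrences of nominals and `◇⁻¹` are positive,
and all occurrences of `□⁻¹` are negative. -/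
def synClosed : MFp → Prop
  | .bot => True
  | .top => True
  | .var _ => True
  | .nom _ => True
  | .neg φ => synOpen φ
  | .or φ ψ => synClosed φ ∧ synClosed ψ
  | .and φ ψ => synClosed φ ∧ synClosed ψ
  | .dia φ => synClosed φ
  | .box φ => synClosed φ
  | .idia φ => synClosed φ
  | .ibox _ => False

/-- Syntactically open: all occurrences of nominals and `◇⁻¹` are negative,
and all occurrences of `□⁻¹` are positive. -/
def synOpen : MFp → Prop
  | .bot => True
  | .top => True
  | .var _ => True
  | .nom _ => False
  | .neg φ => synClosed φ
  | .or φ ψ => synOpen φ ∧ synOpen ψ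
  | .and φ ψ => synOpen φ ∧ synOpen ψ
  | .dia φ => synOpen φ
  | .box φ => synOpen φ
  | .idia _ => False
  | .ibox φ => synOpen φ
end

/-- The propositional variable `p` occurs in the formula. -/
def occursP (p : Nat) : MFp → Prop
  | .bot => False
  | .top => False
  | .var q => q = p
  | .nom _ => False
  | .neg φ => occursP p φ
  | .or φ ψ => occursP p φ ∨ occursP p ψ
  | .and φ ψ => occursP p φ ∨ occursP p ψ
  | .dia φ => occursP p φ
  | .box φ => occursP p φ
  | .idia φ => occursP p φ
  | .ibox φ => occursP p φ

/-- Downwards monotone in `p`: shrinking the set interpreting `p` preserves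
truth, in every model. -/
def downMonoP (p : Nat) (φ : MFp) : Prop :=
  ∀ (W : Type) (R : W → W → Prop) (V V' : Nat → Set W) (g : Nat → W),
    V' p ⊆ V p → (∀ q, q ≠ p → V q = V' q) →
    ∀ w : W, satp R V g φ w → satp R V' g φ w

namespace RAhelp

variable {W : Type}

/-- `K` is an intersection of admissible supersets. -/
def closedIn (F : GenFrame W) (K : Set W) : Prop :=
  ∀ x ∉ K, ∃ N ∈ F.adm, K ⊆ N ∧ x ∉ N

theorem union_adm (F : GenFrame W) {N M : Set W} (hN : N ∈ F.adm) (hM : M ∈ F.adm) :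
    N ∪ M ∈ F.adm := by
  have h := F.compl_mem _ (F.inter_mem _ (F.compl_mem _ hN) _ (F.compl_mem _ hM))
  rwa [Set.compl_inter, compl_compl, compl_compl] at h

theorem empty_adm (F : GenFrame W) : (∅ : Set W) ∈ F.adm := by
  have h := F.compl_mem _ F.univ_mem
  rwa [Set.compl_univ] at h

theorem diaOp_mono {R : W → W → Prop} {K L : Set W} (h : K ⊆ L) :
    diaOp R K ⊆ diaOp R L := by
  rintro x ⟨v, hv, hvK⟩; exact ⟨v, hv, h hvK⟩

theorem idiaOp_mono {R : W → W → Prop} {K L : Set W} (h : K ⊆ L) :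
    idiaOp R K ⊆ idiaOp R L := by
  rintro x ⟨v, hv, hvK⟩; exact ⟨v, hv, h hvK⟩

/-- In a descriptive frame, `◇` of a closed set is closed. -/
theorem dia_closedIn (F : GenFrame W) (ht : F.tight) (hc : F.cpt) (hne : Nonempty W)
    {K : Set W} (hK : closedIn F K) : closedIn F (diaOp F.R K) := by
  have key : ∀ y : W, (∀ M ∈ F.adm, K ⊆ M → y ∈ diaOp F.R M) → y ∈ diaOp F.R K := by
    intro y hy
    set Fam : Set (Set W) := {M | M ∈ F.adm ∧ K ⊆ M} ∪ {Y | Y ∈ F.adm ∧ {z | F.R y z} ⊆ Y}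
      with hFam
    have hsub : Fam ⊆ F.adm := by rintro M (⟨h1, _⟩ | ⟨h1, _⟩) <;> exact h1
    have hfip : ∀ D : Set (Set W), D ⊆ Fam → D.Finite → (⋂₀ D).Nonempty := by
      intro D hD hDfin
      have hcomb : ∃ M, (M ∈ F.adm ∧ K ⊆ M) ∧ ∃ Y, (Y ∈ F.adm ∧ {z | F.R y z} ⊆ Y) ∧
          ∀ X ∈ D, M ∩ Y ⊆ X := by
        refine Set.Finite.induction_on_subset D hDfin ?_ ?_
        · exact ⟨Set.univ, ⟨F.univ_mem, Set.subset_univ _⟩,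
            Set.univ, ⟨F.univ_mem, Set.subset_univ _⟩, by simp⟩
        · rintro X D' hXD _ _ ih
          obtain ⟨M, hM, Y, hY, hMY⟩ := ih
          rcases hD hXD with hX | hX
          · refine ⟨M ∩ X, ⟨F.inter_mem _ hM.1 _ hX.1, Set.subset_inter hM.2 hX.2⟩, Y, hY, ?_⟩
            rintro Z (rfl | hZ)
            · exact fun a ha => ha.1.2
            · intro a ha; exact hMY Z hZ ⟨ha.1.1, ha.2⟩
          · refine ⟨M, hM, Y ∩ X, ⟨F.inter_mem _ hY.1 _ hX.1, Set.subset_inter hY.2 hX.2⟩, ?_⟩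
            rintro Z (rfl | hZ)
            · exact fun a ha => ha.2.2
            · intro a ha; exact hMY Z hZ ⟨ha.1, ha.2.1⟩
      obtain ⟨M, hM, Y, hY, hMY⟩ := hcomb
      obtain ⟨z, hRyz, hzM⟩ := hy M hM.1 hM.2
      have hzY : z ∈ Y := hY.2 hRyz
      exact ⟨z, Set.mem_sInter.mpr fun X hX => hMY X hX ⟨hzM, hzY⟩⟩
    obtain ⟨z, hz⟩ := hc Fam hsub hfip
    have hzK : z ∈ K := by
      by_contra hzK
      obtain ⟨N, hN, hKN, hzN⟩ := hK z hzK
      exact hzN (hz _ (Or.inl ⟨hN, hKN⟩))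
    have hRyz : F.R y z := by
      rw [ht]
      intro Y' hY' hzY'
      by_contra hnd
      have : {z' | F.R y z'} ⊆ Y'ᶜ := by
        intro w hw
        intro hwY'
        exact hnd ⟨w, hw, hwY'⟩
      exact (hz _ (Or.inr ⟨F.compl_mem _ hY', this⟩)) hzY'
    exact ⟨z, hRyz, hzK⟩
  intro x hx
  have : ¬ ∀ M ∈ F.adm, K ⊆ M → x ∈ diaOp F.R M := fun h => hx (key x h)
  push_neg at this
  obtain ⟨M, hM, hKM, hxM⟩ := this
  exact ⟨diaOp F.R M, F.dia_mem _ hM, diaOp_mono hKM, hxM⟩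

/-- In a descriptive frame, `◇⁻¹` of a closed set is closed. -/
theorem idia_closedIn (F : GenFrame W) (ht : F.tight) (hc : F.cpt) (hne : Nonempty W)
    {K : Set W} (hK : closedIn F K) : closedIn F (idiaOp F.R K) := by
  have key : ∀ x : W, (∀ Y ∈ F.adm, x ∈ Y → (K ∩ diaOp F.R Y).Nonempty) →
      x ∈ idiaOp F.R K := by
    intro x hx
    set Fam : Set (Set W) := {M | M ∈ F.adm ∧ K ⊆ M} ∪
      {D | ∃ Y, Y ∈ F.adm ∧ x ∈ Y ∧ D = diaOp F.R Y} with hFam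
    have hsub : Fam ⊆ F.adm := by
      rintro M (⟨h1, _⟩ | ⟨Y, hY, _, rfl⟩)
      · exact h1
      · exact F.dia_mem _ hY
    have hfip : ∀ D : Set (Set W), D ⊆ Fam → D.Finite → (⋂₀ D).Nonempty := by
      intro D hD hDfin
      have hcomb : ∃ M, (M ∈ F.adm ∧ K ⊆ M) ∧ ∃ Y, (Y ∈ F.adm ∧ x ∈ Y) ∧
          ∀ X ∈ D, M ∩ diaOp F.R Y ⊆ X := by
        refine Set.Finite.induction_on_subset D hDfin ?_ ?_
        · exact ⟨Set.univ, ⟨F.univ_mem, Set.subset_univ _⟩,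
            Set.univ, ⟨F.univ_mem, Set.mem_univ _⟩, by simp⟩
        · rintro X D' hXD _ _ ih
          obtain ⟨M, hM, Y, hY, hMY⟩ := ih
          rcases hD hXD with hX | ⟨Y', hY', hxY', rfl⟩
          · refine ⟨M ∩ X, ⟨F.inter_mem _ hM.1 _ hX.1, Set.subset_inter hM.2 hX.2⟩, Y, hY, ?_⟩
            rintro Z (rfl | hZ)
            · exact fun a ha => ha.1.2
            · intro a ha; exact hMY Z hZ ⟨ha.1.1, ha.2⟩
          · refine ⟨M, hM, Y ∩ Y', ⟨F.inter_mem _ hY.1 _ hY', ⟨hY.2, hxY'⟩⟩, ?_⟩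
            rintro Z (rfl | hZ)
            · rintro a ⟨_, v, hv, hvY⟩; exact ⟨v, hv, hvY.2⟩
            · rintro a ⟨ha1, v, hv, hvY⟩; exact hMY Z hZ ⟨ha1, v, hv, hvY.1⟩
      obtain ⟨M, hM, Y, hY, hMY⟩ := hcomb
      obtain ⟨z, hzK, hzD⟩ := hx Y hY.1 hY.2
      exact ⟨z, Set.mem_sInter.mpr fun X hX => hMY X hX ⟨hM.2 hzK, hzD⟩⟩
    obtain ⟨z, hz⟩ := hc Fam hsub hfip
    have hzK : z ∈ K := by
      by_contra hzK
      obtain ⟨N, hN, hKN, hzN⟩ := hK z hzK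
      exact hzN (hz _ (Or.inl ⟨hN, hKN⟩))
    have hRzx : F.R z x := by
      rw [ht]
      intro Y hY hxY
      exact hz _ (Or.inr ⟨Y, hY, hxY, rfl⟩)
    exact ⟨z, hRzx, hzK⟩
  intro x hx
  have : ¬ ∀ Y ∈ F.adm, x ∈ Y → (K ∩ diaOp F.R Y).Nonempty := fun h => hx (key x h)
  push_neg at this
  obtain ⟨Y, hY, hxY, hempty⟩ := this
  refine ⟨Yᶜ, F.compl_mem _ hY, ?_, fun h => h hxY⟩
  rintro a ⟨z, hRza, hzK⟩ haY
  have : z ∈ K ∩ diaOp F.R Y := ⟨hzK, a, hRza, haY⟩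
  rw [hempty] at this
  exact this

/-- `◇` of an open set is open. -/
theorem dia_openIn (F : GenFrame W) {U : Set W} (hU : closedIn F Uᶜ) :
    closedIn F (diaOp F.R U)ᶜ := by
  intro x hx
  rw [Set.notMem_compl_iff] at hx
  obtain ⟨z, hRxz, hzU⟩ := hx
  obtain ⟨N', hN', hsubN', hzN'⟩ := hU z (by simpa using hzU)
  have hNU : N'ᶜ ⊆ U := by
    intro a ha
    by_contra haU
    exact ha (hsubN' haU)
  refine ⟨(diaOp F.R N'ᶜ)ᶜ, F.compl_mem _ (F.dia_mem _ (F.compl_mem _ hN')), ?_, ?_⟩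
  · intro a ha
    intro hmem
    exact ha (diaOp_mono hNU hmem)
  · intro h
    exact h ⟨z, hRxz, hzN'⟩

end RAhelp

namespace RAhelp

variable {W : Type}

/-- Closedness / openness of truth sets of syntactically closed / open formulas. -/
theorem clo (F : GenFrame W) (hd : F.differentiated) (ht : F.tight) (hc : F.cpt)
    (hne : Nonempty W) (V : Nat → Set W) (hV : ∀ q, V q ∈ F.adm) (g : Nat → W) :
    ∀ φ : MFp, (synClosed φ → closedIn F {u | satp F.R V g φ u}) ∧
      (synOpen φ → closedIn F {u | satp F.R V g φ u}ᶜ) := by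
  intro φ
  induction φ with
  | bot =>
    constructor
    · intro _ x hx
      exact ⟨∅, empty_adm F, by intro a ha; exact ha.elim, fun h => h⟩
    · intro _ x hx
      exact absurd (fun h : False => h) hx
  | top =>
    constructor
    · intro _ x hx
      exact absurd trivial hx
    · intro _ x hx
      refine ⟨∅, empty_adm F, ?_, fun h => h⟩
      intro a ha
      exact absurd trivial ha
  | var q =>
    constructor
    · intro _ x hx
      exact ⟨V q, hV q, fun a ha => ha, hx⟩
    · intro _ x hx
      refine ⟨(V q)ᶜ, F.compl_mem _ (hV q), fun a ha => ha, ?_⟩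
      simp only [Set.notMem_compl_iff]
      exact Set.not_notMem.mp hx
  | nom k =>
    constructor
    · intro _ x hx
      have hxg : x ≠ g k := hx
      obtain ⟨X, hX, hgX, hxX⟩ := hd (g k) x (fun h => hxg h.symm)
      refine ⟨X, hX, ?_, hxX⟩
      intro a (ha : a = g k)
      rw [ha]; exact hgX
    · intro h
      exact absurd h (by intro hh; exact hh)
  | neg φ ih =>
    constructor
    · intro hcl x hx
      have hx' : x ∈ {u | satp F.R V g φ u} := Set.not_notMem.mp hx
      exact ih.2 hcl x (by simpa using hx')
    · intro hop x hx
      have hx' : x ∉ {u | satp F.R V g φ u} := by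
        intro h
        exact hx (fun hn => hn h)
      obtain ⟨N, hN, hsub, hxN⟩ := ih.1 hop x hx'
      refine ⟨N, hN, ?_, hxN⟩
      intro a ha
      exact hsub (not_not.mp ha)
  | or φ ψ ihφ ihψ =>
    constructor
    · rintro ⟨h1, h2⟩ x hx
      have hx1 : ¬ satp F.R V g φ x := fun h => hx (Or.inl h)
      have hx2 : ¬ satp F.R V g ψ x := fun h => hx (Or.inr h)
      obtain ⟨N1, hN1, hs1, hx1'⟩ := ihφ.1 h1 x hx1
      obtain ⟨N2, hN2, hs2, hx2'⟩ := ihψ.1 h2 x hx2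
      refine ⟨N1 ∪ N2, union_adm F hN1 hN2, ?_, ?_⟩
      · rintro a (ha | ha)
        · exact Or.inl (hs1 ha)
        · exact Or.inr (hs2 ha)
      · rintro (h | h)
        · exact hx1' h
        · exact hx2' h
    · rintro ⟨h1, h2⟩ x hx
      have hx' : satp F.R V g φ x ∨ satp F.R V g ψ x := Set.not_notMem.mp hx
      rcases hx' with h | h
      · obtain ⟨N, hN, hs, hxN⟩ := ihφ.2 h1 x (fun hn => hn h)
        refine ⟨N, hN, ?_, hxN⟩
        intro a ha
        exact hs (fun haφ => ha (Or.inl haφ))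
      · obtain ⟨N, hN, hs, hxN⟩ := ihψ.2 h2 x (fun hn => hn h)
        refine ⟨N, hN, ?_, hxN⟩
        intro a ha
        exact hs (fun haψ => ha (Or.inr haψ))
  | and φ ψ ihφ ihψ =>
    constructor
    · rintro ⟨h1, h2⟩ x hx
      have hx' : ¬ satp F.R V g φ x ∨ ¬ satp F.R V g ψ x := by
        by_contra hcon
        push_neg at hcon
        exact hx ⟨hcon.1, hcon.2⟩
      rcases hx' with h | h
      · obtain ⟨N, hN, hs, hxN⟩ := ihφ.1 h1 x h
        exact ⟨N, hN, fun a ha => hs ha.1, hxN⟩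
      · obtain ⟨N, hN, hs, hxN⟩ := ihψ.1 h2 x h
        exact ⟨N, hN, fun a ha => hs ha.2, hxN⟩
    · rintro ⟨h1, h2⟩ x hx
      have hx' : satp F.R V g φ x ∧ satp F.R V g ψ x := Set.not_notMem.mp hx
      obtain ⟨N1, hN1, hs1, hx1'⟩ := ihφ.2 h1 x (fun hn => hn hx'.1)
      obtain ⟨N2, hN2, hs2, hx2'⟩ := ihψ.2 h2 x (fun hn => hn hx'.2)
      refine ⟨N1 ∪ N2, union_adm F hN1 hN2, ?_, ?_⟩
      · intro a ha
        by_contra hcon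
        rw [Set.mem_union, not_or] at hcon
        have ha1 : satp F.R V g φ a := by
          by_contra h
          exact hcon.1 (hs1 h)
        have ha2 : satp F.R V g ψ a := by
          by_contra h
          exact hcon.2 (hs2 h)
        exact ha ⟨ha1, ha2⟩
      · rintro (h | h)
        · exact hx1' h
        · exact hx2' h
  | dia φ ih =>
    constructor
    · intro hcl
      have : {u | satp F.R V g (.dia φ) u} = diaOp F.R {u | satp F.R V g φ u} := rfl
      rw [this]
      exact dia_closedIn F ht hc hne (ih.1 hcl)
    · intro hop
      have : {u | satp F.R V g (.dia φ) u} = diaOp F.R {u | satp F.R V g φ u} := rfl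
      rw [this]
      exact dia_openIn F (ih.2 hop)
  | box φ ih =>
    constructor
    · intro hcl
      have hb : {u | satp F.R V g (.box φ) u} =
          (diaOp F.R {u | satp F.R V g φ u}ᶜ)ᶜ := by
        ext u
        constructor
        · rintro h ⟨v, hv, hvφ⟩
          exact hvφ (h v hv)
        · intro h v hv
          by_contra hcon
          exact h ⟨v, hv, hcon⟩
      rw [hb]
      have hUo : closedIn F ({u | satp F.R V g φ u}ᶜ)ᶜ := by
        have := ih.1 hcl
        rwa [compl_compl]
      exact dia_openIn F hUo
    · intro hop
      have hb : {u | satp F.R V g (.box φ) u}ᶜ =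
          diaOp F.R ({u | satp F.R V g φ u}ᶜ) := by
        ext u
        constructor
        · intro h
          by_contra hcon
          apply h
          intro v hv
          by_contra hvφ
          exact hcon ⟨v, hv, hvφ⟩
        · rintro ⟨v, hv, hvφ⟩ h
          exact hvφ (h v hv)
      rw [hb]
      exact dia_closedIn F ht hc hne (ih.2 hop)
  | idia φ ih =>
    constructor
    · intro hcl
      have : {u | satp F.R V g (.idia φ) u} = idiaOp F.R {u | satp F.R V g φ u} := rfl
      rw [this]
      exact idia_closedIn F ht hc hne (ih.1 hcl)
    · intro hop
      exact absurd hop (by intro h; exact h)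
  | ibox φ ih =>
    constructor
    · intro hcl
      exact absurd hcl (by intro h; exact h)
    · intro hop
      have hb : {u | satp F.R V g (.ibox φ) u}ᶜ =
          idiaOp F.R ({u | satp F.R V g φ u}ᶜ) := by
        ext u
        constructor
        · intro h
          by_contra hcon
          apply h
          intro v hv
          by_contra hvφ
          exact hcon ⟨v, hv, hvφ⟩
        · rintro ⟨v, hv, hvφ⟩ h
          exact hvφ (h v hv)
      rw [hb]
      exact idia_closedIn F ht hc hne (ih.2 hop)

end RAhelp

namespace RAhelp

variable {W ι : Type}

/-- Componentwise relation on `W × ι`. -/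
def rOm (R : W → W → Prop) : (W × ι) → (W × ι) → Prop := fun a b => a.2 = b.2 ∧ R a.1 b.1

/-- Cylinder over a set of worlds. -/
def cyl (N : Set W) : Set (W × ι) := {a | a.1 ∈ N}

/-- Marginal cylinder over a set of indices. -/
def mrg (E : Set ι) : Set (W × ι) := {a | a.2 ∈ E}

theorem boxOp_compl_eq {α : Type} (R : α → α → Prop) (T : Set α) :
    (diaOp R T)ᶜ = boxOp R Tᶜ := by
  ext a
  constructor
  · intro h v hv
    intro hvT
    exact h ⟨v, hv, hvT⟩
  · rintro h ⟨v, hv, hvT⟩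
    exact h v hv hvT

theorem boxOp_inter {α : Type} (R : α → α → Prop) (T₁ T₂ : Set α) :
    boxOp R (T₁ ∩ T₂) = boxOp R T₁ ∩ boxOp R T₂ := by
  ext a
  constructor
  · intro h
    exact ⟨fun v hv => (h v hv).1, fun v hv => (h v hv).2⟩
  · rintro ⟨h1, h2⟩ v hv
    exact ⟨h1 v hv, h2 v hv⟩

theorem boxOp_univ {α : Type} (R : α → α → Prop) :
    boxOp R (Set.univ : Set α) = Set.univ := by
  ext a
  simp [boxOp]

theorem dia_compl_idia {α : Type} (R : α → α → Prop) (T : Set α) :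
    diaOp R (idiaOp R T)ᶜ ⊆ Tᶜ := by
  rintro a ⟨b, hab, hb⟩ haT
  exact hb ⟨a, hab, haT⟩

/-- Existence of standard parts. -/
theorem st_exists (F : GenFrame W) (hc : F.cpt) (hne : Nonempty W)
    (u : Ultrafilter (W × ι)) : ∃ x : W, ∀ N ∈ F.adm, (x ∈ N ↔ cyl N ∈ u) := by
  classical
  set Fam : Set (Set W) := {N | N ∈ F.adm ∧ cyl N ∈ u} with hFam
  have hsub : Fam ⊆ F.adm := fun N hN => hN.1
  have hfip : ∀ D : Set (Set W), D ⊆ Fam → D.Finite → (⋂₀ D).Nonempty := by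
    intro D hD hDfin
    have hmem : (⋂ N ∈ D, cyl (ι := ι) N) ∈ u := by
      refine (Filter.biInter_mem hDfin).mpr ?_
      intro N hN
      exact (hD hN).2
    obtain ⟨a, ha⟩ := Ultrafilter.nonempty_of_mem hmem
    refine ⟨a.1, ?_⟩
    intro N hN
    have := Set.mem_iInter₂.mp ha N hN
    exact this
  obtain ⟨x, hx⟩ := hc Fam hsub hfip
  refine ⟨x, ?_⟩
  intro N hN
  constructor
  · intro hxN
    by_contra hcyl
    have hcompl : (cyl (ι := ι) N)ᶜ ∈ u := Ultrafilter.compl_mem_iff_notMem.mpr hcyl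
    have : cyl (ι := ι) (Nᶜ) ∈ u := hcompl
    have hNc : (Nᶜ) ∈ Fam := ⟨F.compl_mem _ hN, this⟩
    exact (hx _ hNc) hxN
  · intro hcyl
    exact hx _ (⟨hN, hcyl⟩ : N ∈ Fam)

/-- Standard parts are unique. -/
theorem st_eq (F : GenFrame W) (hd : F.differentiated) {u : Ultrafilter (W × ι)} {x y : W}
    (hx : ∀ N ∈ F.adm, (x ∈ N ↔ cyl N ∈ u)) (hy : ∀ N ∈ F.adm, y ∈ N → cyl N ∈ u) :
    x = y := by
  by_contra hne
  obtain ⟨X, hX, hyX, hxX⟩ := hd y x (fun h => hne h.symm)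
  exact hxX ((hx X hX).mpr (hy X hX hyX))

/-- Forward existence lemma (saturation for `◇`). -/
theorem ex_succ (F : GenFrame W) (U0 : Ultrafilter ι) {u : Ultrafilter (W × ι)}
    (hu : ∀ E ∈ U0, mrg E ∈ u) {S : Set (W × ι)}
    (hS : diaOp (rOm F.R) S ∈ u) :
    ∃ v : Ultrafilter (W × ι), (∀ E ∈ U0, mrg E ∈ v) ∧ S ∈ v ∧
      (∀ T, T ∈ v → diaOp (rOm F.R) T ∈ u) := by
  classical
  set L : Filter (W × ι) :=
    { sets := {X | ∃ T E, boxOp (rOm F.R) T ∈ u ∧ E ∈ U0 ∧ T ∩ mrg E ∩ S ⊆ X}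
      univ_sets := ⟨Set.univ, Set.univ, by rw [boxOp_univ]; exact Filter.univ_mem,
        Filter.univ_mem, Set.subset_univ _⟩
      sets_of_superset := by
        rintro X Y ⟨T, E, hT, hE, hsub⟩ hXY
        exact ⟨T, E, hT, hE, hsub.trans hXY⟩
      inter_sets := by
        rintro X Y ⟨T1, E1, hT1, hE1, hsub1⟩ ⟨T2, E2, hT2, hE2, hsub2⟩
        refine ⟨T1 ∩ T2, E1 ∩ E2, ?_, Filter.inter_mem hE1 hE2, ?_⟩
        · rw [boxOp_inter]; exact Filter.inter_mem hT1 hT2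
        · rintro a ⟨⟨⟨haT1, haT2⟩, haE⟩, haS⟩
          exact ⟨hsub1 ⟨⟨haT1, haE.1⟩, haS⟩, hsub2 ⟨⟨haT2, haE.2⟩, haS⟩⟩ } with hL
  have hLne : L.NeBot := by
    refine Filter.forall_mem_nonempty_iff_neBot.mp ?_
    rintro X ⟨T, E, hT, hE, hsub⟩
    have hmem : boxOp (rOm F.R) T ∩ mrg E ∩ diaOp (rOm F.R) S ∈ u :=
      Filter.inter_mem (Filter.inter_mem hT (hu E hE)) hS
    obtain ⟨a, ⟨haT, haE⟩, b, hab, hbS⟩ := Ultrafilter.nonempty_of_mem hmem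
    refine ⟨b, hsub ⟨⟨haT b hab, ?_⟩, hbS⟩⟩
    show b.2 ∈ E
    rw [← hab.1]
    exact haE
  have hle := Ultrafilter.of_le L
  refine ⟨Ultrafilter.of L, ?_, ?_, ?_⟩
  · intro E hE
    exact hle (⟨Set.univ, E, by rw [boxOp_univ]; exact Filter.univ_mem, hE,
      fun a ha => ha.1.2⟩ : mrg E ∈ L)
  · exact hle (⟨Set.univ, Set.univ, by rw [boxOp_univ]; exact Filter.univ_mem,
      Filter.univ_mem, fun a ha => ha.2⟩ : S ∈ L)
  · intro T hT
    by_contra hdn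
    have h1 : (diaOp (rOm F.R) T)ᶜ ∈ u := Ultrafilter.compl_mem_iff_notMem.mpr hdn
    rw [boxOp_compl_eq] at h1
    have h2 : Tᶜ ∈ L := ⟨Tᶜ, Set.univ, h1, Filter.univ_mem, fun a ha => ha.1.1⟩
    exact Ultrafilter.compl_mem_iff_notMem.mp (hle h2) hT

/-- Backward existence lemma (saturation for `◇⁻¹`). -/
theorem ex_pred (F : GenFrame W) (U0 : Ultrafilter ι) {u : Ultrafilter (W × ι)}
    (hu : ∀ E ∈ U0, mrg E ∈ u) {S : Set (W × ι)}
    (hS : idiaOp (rOm F.R) S ∈ u) :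
    ∃ v : Ultrafilter (W × ι), (∀ E ∈ U0, mrg E ∈ v) ∧ S ∈ v ∧
      (∀ T, T ∈ u → diaOp (rOm F.R) T ∈ v) := by
  classical
  set L : Filter (W × ι) :=
    { sets := {X | ∃ T E, T ∈ u ∧ E ∈ U0 ∧ diaOp (rOm F.R) T ∩ mrg E ∩ S ⊆ X}
      univ_sets := ⟨Set.univ, Set.univ, Filter.univ_mem, Filter.univ_mem, Set.subset_univ _⟩
      sets_of_superset := by
        rintro X Y ⟨T, E, hT, hE, hsub⟩ hXY
        exact ⟨T, E, hT, hE, hsub.trans hXY⟩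
      inter_sets := by
        rintro X Y ⟨T1, E1, hT1, hE1, hsub1⟩ ⟨T2, E2, hT2, hE2, hsub2⟩
        refine ⟨T1 ∩ T2, E1 ∩ E2, Filter.inter_mem hT1 hT2, Filter.inter_mem hE1 hE2, ?_⟩
        rintro a ⟨⟨⟨b, hab, hbT⟩, haE⟩, haS⟩
        exact ⟨hsub1 ⟨⟨⟨b, hab, hbT.1⟩, haE.1⟩, haS⟩, hsub2 ⟨⟨⟨b, hab, hbT.2⟩, haE.2⟩, haS⟩⟩ }
    with hL
  have hLne : L.NeBot := by
    refine Filter.forall_mem_nonempty_iff_neBot.mp ?_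
    rintro X ⟨T, E, hT, hE, hsub⟩
    have hmem : T ∩ mrg E ∩ idiaOp (rOm F.R) S ∈ u :=
      Filter.inter_mem (Filter.inter_mem hT (hu E hE)) hS
    obtain ⟨a, ⟨haT, haE⟩, b, hba, hbS⟩ := Ultrafilter.nonempty_of_mem hmem
    refine ⟨b, hsub ⟨⟨⟨a, hba, haT⟩, ?_⟩, hbS⟩⟩
    show b.2 ∈ E
    rw [hba.1]
    exact haE
  have hle := Ultrafilter.of_le L
  refine ⟨Ultrafilter.of L, ?_, ?_, ?_⟩
  · intro E hE
    exact hle (⟨Set.univ, E, Filter.univ_mem, hE, fun a ha => ha.1.2⟩ : mrg E ∈ L)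
  · exact hle (⟨Set.univ, Set.univ, Filter.univ_mem, Filter.univ_mem,
      fun a ha => ha.2⟩ : S ∈ L)
  · intro T hT
    exact hle (⟨T, Set.univ, hT, Filter.univ_mem, fun a ha => ha.1.1⟩ :
      diaOp (rOm F.R) T ∈ L)

/-- Back condition for the standard part map. -/
theorem ex_back (F : GenFrame W) (U0 : Ultrafilter ι) {u : Ultrafilter (W × ι)}
    (hu : ∀ E ∈ U0, mrg E ∈ u) {x y : W}
    (hx : ∀ N ∈ F.adm, (x ∈ N ↔ cyl N ∈ u)) (hRxy : F.R x y) :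
    ∃ v : Ultrafilter (W × ι), (∀ E ∈ U0, mrg E ∈ v) ∧
      (∀ N ∈ F.adm, y ∈ N → cyl N ∈ v) ∧
      (∀ T, T ∈ v → diaOp (rOm F.R) T ∈ u) := by
  classical
  set L : Filter (W × ι) :=
    { sets := {X | ∃ N T E, (N ∈ F.adm ∧ y ∈ N) ∧ boxOp (rOm F.R) T ∈ u ∧ E ∈ U0 ∧
        cyl N ∩ T ∩ mrg E ⊆ X}
      univ_sets := ⟨Set.univ, Set.univ, Set.univ, ⟨F.univ_mem, Set.mem_univ _⟩,
        by rw [boxOp_univ]; exact Filter.univ_mem, Filter.univ_mem, Set.subset_univ _⟩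
      sets_of_superset := by
        rintro X Y ⟨N, T, E, hN, hT, hE, hsub⟩ hXY
        exact ⟨N, T, E, hN, hT, hE, hsub.trans hXY⟩
      inter_sets := by
        rintro X Y ⟨N1, T1, E1, hN1, hT1, hE1, hsub1⟩ ⟨N2, T2, E2, hN2, hT2, hE2, hsub2⟩
        refine ⟨N1 ∩ N2, T1 ∩ T2, E1 ∩ E2, ⟨F.inter_mem _ hN1.1 _ hN2.1, hN1.2, hN2.2⟩,
          ?_, Filter.inter_mem hE1 hE2, ?_⟩
        · rw [boxOp_inter]; exact Filter.inter_mem hT1 hT2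
        · rintro a ⟨⟨haN, haT⟩, haE⟩
          exact ⟨hsub1 ⟨⟨haN.1, haT.1⟩, haE.1⟩, hsub2 ⟨⟨haN.2, haT.2⟩, haE.2⟩⟩ }
    with hL
  have hLne : L.NeBot := by
    refine Filter.forall_mem_nonempty_iff_neBot.mp ?_
    rintro X ⟨N, T, E, hN, hT, hE, hsub⟩
    have hxdia : x ∈ diaOp F.R N := ⟨y, hRxy, hN.2⟩
    have hdia_adm : diaOp F.R N ∈ F.adm := F.dia_mem _ hN.1
    have hcylmem : cyl (ι := ι) (diaOp F.R N) ∈ u := (hx _ hdia_adm).mp hxdia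
    have hmem : cyl (diaOp F.R N) ∩ boxOp (rOm F.R) T ∩ mrg E ∈ u :=
      Filter.inter_mem (Filter.inter_mem hcylmem hT) (hu E hE)
    obtain ⟨a, ⟨hacyl, haT⟩, haE⟩ := Ultrafilter.nonempty_of_mem hmem
    obtain ⟨w', hRw', hw'N⟩ := hacyl
    refine ⟨(w', a.2), hsub ⟨⟨hw'N, haT (w', a.2) ⟨rfl, hRw'⟩⟩, haE⟩⟩
  have hle := Ultrafilter.of_le L
  refine ⟨Ultrafilter.of L, ?_, ?_, ?_⟩
  · intro E hE
    exact hle (⟨Set.univ, Set.univ, E, ⟨F.univ_mem, Set.mem_univ _⟩,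
      by rw [boxOp_univ]; exact Filter.univ_mem, hE, fun a ha => ha.2⟩ : mrg E ∈ L)
  · intro N hN hyN
    exact hle (⟨N, Set.univ, Set.univ, ⟨hN, hyN⟩,
      by rw [boxOp_univ]; exact Filter.univ_mem, Filter.univ_mem,
      fun a ha => ha.1.1⟩ : cyl N ∈ L)
  · intro T hT
    by_contra hdn
    have h1 : (diaOp (rOm F.R) T)ᶜ ∈ u := Ultrafilter.compl_mem_iff_notMem.mpr hdn
    rw [boxOp_compl_eq] at h1
    have h2 : Tᶜ ∈ L := ⟨Set.univ, Tᶜ, Set.univ, ⟨F.univ_mem, Set.mem_univ _⟩, h1,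
      Filter.univ_mem, fun a ha => ha.1.2⟩
    exact Ultrafilter.compl_mem_iff_notMem.mp (hle h2) hT

/-- Forth condition (continuity) for the standard part map. -/
theorem st_forth (F : GenFrame W) (ht : F.tight) {u v : Ultrafilter (W × ι)} {x y : W}
    (hx : ∀ N ∈ F.adm, (x ∈ N ↔ cyl N ∈ u)) (hy : ∀ N ∈ F.adm, (y ∈ N ↔ cyl N ∈ v))
    (hrel : ∀ T, T ∈ v → diaOp (rOm F.R) T ∈ u) : F.R x y := by
  rw [ht]
  intro Y hY hyY
  have hcyl : cyl (ι := ι) Y ∈ v := (hy Y hY).mp hyY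
  have hdia : diaOp (rOm F.R) (cyl Y) ∈ u := hrel _ hcyl
  have hsub : diaOp (rOm F.R) (cyl (ι := ι) Y) ⊆ cyl (diaOp F.R Y) := by
    rintro a ⟨b, hab, hbY⟩
    exact ⟨b.1, hab.2, hbY⟩
  have : cyl (ι := ι) (diaOp F.R Y) ∈ u := Filter.mem_of_superset hdia hsub
  exact (hx _ (F.dia_mem _ hY)).mpr this

/-- Conjugacy: predecessors transfer `◇⁻¹`. -/
theorem conj_idia (F : GenFrame W) {u v : Ultrafilter (W × ι)}
    (hrel : ∀ T, T ∈ u → diaOp (rOm F.R) T ∈ v) {S : Set (W × ι)} (hS : S ∈ v) :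
    idiaOp (rOm F.R) S ∈ u := by
  by_contra hdn
  have h1 : (idiaOp (rOm F.R) S)ᶜ ∈ u := Ultrafilter.compl_mem_iff_notMem.mpr hdn
  have h2 : diaOp (rOm F.R) (idiaOp (rOm F.R) S)ᶜ ∈ v := hrel _ h1
  have h3 : Sᶜ ∈ v := Filter.mem_of_superset h2 (dia_compl_idia _ _)
  exact Ultrafilter.compl_mem_iff_notMem.mp h3 hS

end RAhelp


/-- Restricted version of Ackermann's Lemma for descriptive frames (and for
Kripke frames, where all sets are admissible). -/
theorem restricted_ackermann {W : Type} (F : GenFrame W)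
    (hF : F.descriptive ∨ F.adm = Set.univ)
    (A B : MFp) (p : Nat)
    (hA : synClosed A) (hAp : ¬ occursP p A)
    (hB : synOpen B) (hBmono : downMonoP p B)
    (V : Nat → Set W) (hV : ∀ q, V q ∈ F.adm) (g : Nat → W) :
    ({w | satp F.R (Function.update V p {u | satp F.R V g A u}) g B w} = Set.univ) ↔
      ∃ P ∈ F.adm, {u | satp F.R V g A u} ⊆ P ∧
        {w | satp F.R (Function.update V p P) g B w} = Set.univ := by
  classical
  constructor
  · -- left to right
    intro hBC
    rcases hF with hdesc | huniv
    swap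
    · exact ⟨{u | satp F.R V g A u}, by rw [huniv]; trivial, subset_rfl, hBC⟩
    obtain ⟨hd, ht, hc⟩ := hdesc
    by_contra hcon
    push_neg at hcon
    -- the index type of admissible supersets of ⟦A⟧
    let ι : Type := {P : Set W // P ∈ F.adm ∧ {u | satp F.R V g A u} ⊆ P}
    have hιne : Nonempty ι := ⟨⟨Set.univ, F.univ_mem, Set.subset_univ _⟩⟩
    have hwitE : ∀ i : ι, ∃ x : W, ¬ satp F.R (Function.update V p i.1) g B x := by
      intro i
      have h := hcon i.1 i.2.1 i.2.2
      rw [Set.ne_univ_iff_exists_notMem] at h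
      exact h
    choose wit hwit using hwitE
    have hne : Nonempty W := ⟨wit (Classical.arbitrary ι)⟩
    -- the downset ultrafilter on ι
    let dn : ι → Set ι := fun j => {i : ι | i.1 ⊆ j.1}
    let L0 : Filter ι :=
      { sets := {E | ∃ j : ι, dn j ⊆ E}
        univ_sets := ⟨Classical.arbitrary ι, Set.subset_univ _⟩
        sets_of_superset := by
          rintro X Y ⟨j, hj⟩ hXY
          exact ⟨j, hj.trans hXY⟩
        inter_sets := by
          rintro X Y ⟨j1, h1⟩ ⟨j2, h2⟩
          refine ⟨⟨j1.1 ∩ j2.1, F.inter_mem _ j1.2.1 _ j2.2.1,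
            Set.subset_inter j1.2.2 j2.2.2⟩, ?_⟩
          intro i hi
          exact ⟨h1 (hi.trans Set.inter_subset_left), h2 (hi.trans Set.inter_subset_right)⟩ }
    have hL0ne : L0.NeBot := by
      refine Filter.forall_mem_nonempty_iff_neBot.mp ?_
      rintro X ⟨j, hj⟩
      exact ⟨j, hj (subset_rfl : j.1 ⊆ j.1)⟩
    let U0 : Ultrafilter ι := Ultrafilter.of L0
    have hU0dn : ∀ j : ι, dn j ∈ U0 := fun j => Ultrafilter.of_le L0 ⟨j, subset_rfl⟩
    -- standard parts
    have hstE : ∀ u : Ultrafilter (W × ι), ∃ x : W, ∀ N ∈ F.adm, (x ∈ N ↔ RAhelp.cyl N ∈ u) :=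
      fun u => RAhelp.st_exists F hc hne u
    choose st hst using hstE
    -- the carrier
    let Kn : Type := {u : Ultrafilter (W × ι) // ∀ E ∈ U0, RAhelp.mrg E ∈ u}
    let Rk : Kn → Kn → Prop := fun u v => ∀ T, T ∈ v.1 → diaOp (RAhelp.rOm F.R) T ∈ u.1
    -- valuations
    let Gset : Set (W × ι) := {a | a.1 ∈ a.2.1}
    let Vd : Nat → Set Kn := fun q => {u : Kn | st u.1 ∈ Function.update V p {u | satp F.R V g A u} q}
    let Gk : Set Kn := {u : Kn | Gset ∈ u.1}
    let gd : Nat → Kn := fun k =>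
      ⟨U0.map (fun i => ((g k, i) : W × ι)), by
        intro E hE
        rw [Ultrafilter.mem_map]
        exact hE⟩
    let fam : MFp → Set (W × ι) :=
      fun φ => {a | satp F.R (Function.update V p a.2.1) g φ a.1}
    -- genericity
    have hcloA : ∀ x, x ∉ {u | satp F.R V g A u} →
        ∃ N ∈ F.adm, {u | satp F.R V g A u} ⊆ N ∧ x ∉ N :=
      (RAhelp.clo F hd ht hc hne V hV g A).1 hA
    have hgen : ∀ u : Kn, Gset ∈ u.1 → st u.1 ∈ {u | satp F.R V g A u} := by
      intro u hG
      by_contra hnot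
      obtain ⟨N, hN, hsubN, hstN⟩ := hcloA _ hnot
      have hdnj : RAhelp.mrg (dn ⟨N, hN, hsubN⟩) ∈ u.1 := u.2 _ (hU0dn ⟨N, hN, hsubN⟩)
      have hsub : Gset ∩ RAhelp.mrg (dn ⟨N, hN, hsubN⟩) ⊆ RAhelp.cyl N := by
        rintro a ⟨h1, h2⟩
        exact h2 h1
      have hcylN : RAhelp.cyl (ι := ι) N ∈ u.1 :=
        Filter.mem_of_superset (Filter.inter_mem hG hdnj) hsub
      exact hstN ((hst u.1 N hN).mpr hcylN)
    -- standard part of nominal points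
    have hgd_st : ∀ k, st (gd k).1 = g k := by
      intro k
      refine RAhelp.st_eq F hd (hst (gd k).1) ?_
      intro N hN hgN
      show RAhelp.cyl N ∈ U0.map (fun i => ((g k, i) : W × ι))
      rw [Ultrafilter.mem_map]
      have heq : (fun i : ι => ((g k, i) : W × ι)) ⁻¹' RAhelp.cyl N = Set.univ := by
        ext i
        simp only [Set.mem_preimage, Set.mem_univ, iff_true]
        exact hgN
      rw [heq]
      exact Filter.univ_mem
    -- set identities for fam
    have hfam_dia : ∀ ψ : MFp, fam (.dia ψ) = diaOp (RAhelp.rOm F.R) (fam ψ) := by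
      intro ψ
      ext a
      constructor
      · rintro ⟨v, hv, hvψ⟩
        exact ⟨(v, a.2), ⟨rfl, hv⟩, hvψ⟩
      · rintro ⟨b, ⟨h2, hR⟩, hbψ⟩
        refine ⟨b.1, hR, ?_⟩
        rw [h2]
        exact hbψ
    have hfam_idia : ∀ ψ : MFp, fam (.idia ψ) = idiaOp (RAhelp.rOm F.R) (fam ψ) := by
      intro ψ
      ext a
      constructor
      · rintro ⟨v, hv, hvψ⟩
        exact ⟨(v, a.2), ⟨rfl, hv⟩, hvψ⟩
      · rintro ⟨b, ⟨h2, hR⟩, hbψ⟩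
        refine ⟨b.1, hR, ?_⟩
        rw [← h2]
        exact hbψ
    have hfam_box : ∀ ψ : MFp, fam (.box ψ) = (diaOp (RAhelp.rOm F.R) (fam ψ)ᶜ)ᶜ := by
      intro ψ
      ext a
      constructor
      · rintro h ⟨b, ⟨h2, hR⟩, hb⟩
        apply hb
        have := h b.1 hR
        show satp F.R (Function.update V p b.2.1) g ψ b.1
        rw [← h2]
        exact this
      · intro h v hRv
        by_contra hcon
        exact h ⟨(v, a.2), ⟨rfl, hRv⟩, hcon⟩
    have hfam_ibox : ∀ ψ : MFp, fam (.ibox ψ) = (idiaOp (RAhelp.rOm F.R) (fam ψ)ᶜ)ᶜ := by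
      intro ψ
      ext a
      constructor
      · rintro h ⟨b, ⟨h2, hR⟩, hb⟩
        apply hb
        have := h b.1 hR
        show satp F.R (Function.update V p b.2.1) g ψ b.1
        rw [h2]
        exact this
      · intro h v hRv
        by_contra hcon
        exact h ⟨(v, a.2), ⟨rfl, hRv⟩, hcon⟩
    -- the truth lemma on the carrier
    have RL : ∀ φ : MFp, ∀ u : Kn,
        satp Rk (Function.update Vd p Gk) gd φ u ↔ fam φ ∈ u.1 := by
      intro φ
      induction φ with
      | bot =>
        intro u
        constructor
        · exact fun h => h.elim
        · intro h
          obtain ⟨a, ha⟩ := Ultrafilter.nonempty_of_mem h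
          exact ha.elim
      | top =>
        intro u
        constructor
        · intro _
          exact Filter.univ_mem
        · intro _
          trivial
      | var q =>
        intro u
        by_cases hq : q = p
        · subst hq
          show u ∈ Function.update Vd q Gk q ↔ _
          rw [Function.update_self]
          have : fam (.var q) = Gset := by
            ext a
            show a.1 ∈ Function.update V q _ q ↔ _
            rw [Function.update_self]
            exact Iff.rfl
          rw [this]
          exact Iff.rfl
        · show u ∈ Function.update Vd p Gk q ↔ _
          rw [Function.update_of_ne hq]
          have : fam (.var q) = RAhelp.cyl (V q) := by
            ext a
            show a.1 ∈ Function.update V p _ q ↔ _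
            rw [Function.update_of_ne hq]
            exact Iff.rfl
          rw [this]
          show st u.1 ∈ Function.update V p _ q ↔ _
          rw [Function.update_of_ne hq]
          exact hst u.1 (V q) (hV q)
      | nom k =>
        intro u
        constructor
        · intro h
          have heq : u = gd k := h
          rw [heq]
          show fam (.nom k) ∈ U0.map (fun i => ((g k, i) : W × ι))
          rw [Ultrafilter.mem_map]
          have : (fun i : ι => ((g k, i) : W × ι)) ⁻¹' fam (.nom k) = Set.univ := by
            ext i
            simp only [Set.mem_preimage, Set.mem_univ, iff_true]
            show (g k : W) = g k
            rfl
          rw [this]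
          exact Filter.univ_mem
        · intro h
          show u = gd k
          have hu : ∀ S : Set (W × ι), S ∈ u.1 ↔ S ∈ (gd k).1 := by
            intro S
            constructor
            · intro hS
              show S ∈ U0.map (fun i => ((g k, i) : W × ι))
              rw [Ultrafilter.mem_map]
              by_contra hE
              have hEc : ((fun i : ι => ((g k, i) : W × ι)) ⁻¹' S)ᶜ ∈ U0 :=
                Ultrafilter.compl_mem_iff_notMem.mpr hE
              have hmrgc : RAhelp.mrg (((fun i : ι => ((g k, i) : W × ι)) ⁻¹' S)ᶜ) ∈ u.1 :=
                u.2 _ hEc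
              have hmem : S ∩ fam (.nom k) ∩
                  RAhelp.mrg (((fun i : ι => ((g k, i) : W × ι)) ⁻¹' S)ᶜ) ∈ u.1 :=
                Filter.inter_mem (Filter.inter_mem hS h) hmrgc
              obtain ⟨a, ⟨haS, hak⟩, haE⟩ := Ultrafilter.nonempty_of_mem hmem
              apply haE
              show ((g k, a.2) : W × ι) ∈ S
              have ha1 : a.1 = g k := hak
              have : ((g k, a.2) : W × ι) = a := by
                rw [← ha1]
              rw [this]
              exact haS
            · intro hS
              have hES : (fun i : ι => ((g k, i) : W × ι)) ⁻¹' S ∈ U0 :=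
                Ultrafilter.mem_map.mp hS
              have hmrgS : RAhelp.mrg ((fun i : ι => ((g k, i) : W × ι)) ⁻¹' S) ∈ u.1 :=
                u.2 _ hES
              have hsub : RAhelp.mrg ((fun i : ι => ((g k, i) : W × ι)) ⁻¹' S) ∩
                  fam (.nom k) ⊆ S := by
                rintro a ⟨ha2, hak⟩
                have ha1 : a.1 = g k := hak
                have : a = ((g k, a.2) : W × ι) := by
                  rw [← ha1]
                rw [this]
                exact ha2
              exact Filter.mem_of_superset (Filter.inter_mem hmrgS h) hsub
          exact Subtype.ext (Ultrafilter.ext (fun S => hu S))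
      | neg φ ih =>
        intro u
        constructor
        · intro h
          have h2 : fam φ ∉ u.1 := fun hm => h ((ih u).mpr hm)
          exact Ultrafilter.compl_mem_iff_notMem.mpr h2
        · intro h hs
          have h2 : (fam φ)ᶜ ∈ u.1 := h
          exact Ultrafilter.compl_mem_iff_notMem.mp h2 ((ih u).mp hs)
      | or φ ψ ihφ ihψ =>
        intro u
        constructor
        · rintro (h | h)
          · exact Filter.mem_of_superset ((ihφ u).mp h) Set.subset_union_left
          · exact Filter.mem_of_superset ((ihψ u).mp h) Set.subset_union_right
        · intro h
          have h2 : fam φ ∪ fam ψ ∈ u.1 := h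
          rcases (Ultrafilter.union_mem_iff).mp h2 with h3 | h3
          · exact Or.inl ((ihφ u).mpr h3)
          · exact Or.inr ((ihψ u).mpr h3)
      | and φ ψ ihφ ihψ =>
        intro u
        constructor
        · rintro ⟨h1, h2⟩
          exact Filter.inter_mem ((ihφ u).mp h1) ((ihψ u).mp h2)
        · intro h
          have h2 : fam φ ∩ fam ψ ∈ u.1 := h
          exact ⟨(ihφ u).mpr (Filter.mem_of_superset h2 Set.inter_subset_left),
            (ihψ u).mpr (Filter.mem_of_superset h2 Set.inter_subset_right)⟩
      | dia φ ih =>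
        intro u
        rw [hfam_dia]
        constructor
        · rintro ⟨v, hrel, hφ⟩
          exact hrel _ ((ih v).mp hφ)
        · intro h
          obtain ⟨v, hmrg, hSv, hrel⟩ := RAhelp.ex_succ F U0 u.2 h
          exact ⟨⟨v, hmrg⟩, hrel, (ih ⟨v, hmrg⟩).mpr hSv⟩
      | box φ ih =>
        intro u
        rw [hfam_box]
        constructor
        · intro h
          rw [Ultrafilter.compl_mem_iff_notMem]
          intro hdia
          obtain ⟨v, hmrg, hSv, hrel⟩ := RAhelp.ex_succ F U0 u.2 hdia
          have : ¬ satp Rk (Function.update Vd p Gk) gd φ ⟨v, hmrg⟩ := by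
            intro hs
            exact Ultrafilter.compl_mem_iff_notMem.mp hSv ((ih ⟨v, hmrg⟩).mp hs)
          exact this (h ⟨v, hmrg⟩ hrel)
        · intro h v hrel
          apply (ih v).mpr
          by_contra hnot
          have h2 : (fam φ)ᶜ ∈ v.1 := Ultrafilter.compl_mem_iff_notMem.mpr hnot
          have h3 : diaOp (RAhelp.rOm F.R) (fam φ)ᶜ ∈ u.1 := hrel _ h2
          exact Ultrafilter.compl_mem_iff_notMem.mp h h3
      | idia φ ih =>
        intro u
        rw [hfam_idia]
        constructor
        · rintro ⟨v, hrel, hφ⟩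
          exact RAhelp.conj_idia F hrel ((ih v).mp hφ)
        · intro h
          obtain ⟨v, hmrg, hSv, hrel⟩ := RAhelp.ex_pred F U0 u.2 h
          exact ⟨⟨v, hmrg⟩, hrel, (ih ⟨v, hmrg⟩).mpr hSv⟩
      | ibox φ ih =>
        intro u
        rw [hfam_ibox]
        constructor
        · intro h
          rw [Ultrafilter.compl_mem_iff_notMem]
          intro hidia
          obtain ⟨v, hmrg, hSv, hrel⟩ := RAhelp.ex_pred F U0 u.2 hidia
          have : ¬ satp Rk (Function.update Vd p Gk) gd φ ⟨v, hmrg⟩ := by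
            intro hs
            exact Ultrafilter.compl_mem_iff_notMem.mp hSv ((ih ⟨v, hmrg⟩).mp hs)
          exact this (h ⟨v, hmrg⟩ hrel)
        · intro h v hrel
          apply (ih v).mpr
          by_contra hnot
          have h2 : (fam φ)ᶜ ∈ v.1 := Ultrafilter.compl_mem_iff_notMem.mpr hnot
          have h3 : idiaOp (RAhelp.rOm F.R) (fam φ)ᶜ ∈ u.1 := RAhelp.conj_idia F hrel h2
          exact Ultrafilter.compl_mem_iff_notMem.mp h h3
    -- the transfer lemma
    have TL : ∀ φ : MFp, ∀ u : Kn,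
        (synOpen φ → satp F.R (Function.update V p {u | satp F.R V g A u}) g φ (st u.1) →
          satp Rk Vd gd φ u) ∧
        (synClosed φ → satp Rk Vd gd φ u →
          satp F.R (Function.update V p {u | satp F.R V g A u}) g φ (st u.1)) := by
      intro φ
      induction φ with
      | bot =>
        exact fun u => ⟨fun _ h => h.elim, fun _ h => h.elim⟩
      | top =>
        exact fun u => ⟨fun _ _ => trivial, fun _ _ => trivial⟩
      | var q =>
        exact fun u => ⟨fun _ h => h, fun _ h => h⟩
      | nom k =>
        intro u
        constructor
        · intro hop
          exact absurd hop (by intro hh; exact hh)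
        · intro _ h
          have heq : u = gd k := h
          show st u.1 = g k
          rw [heq, hgd_st]
      | neg φ ih =>
        intro u
        constructor
        · intro hop hW hK
          exact hW ((ih u).2 hop hK)
        · intro hcl hK hW
          exact hK ((ih u).1 hcl hW)
      | or φ ψ ihφ ihψ =>
        intro u
        constructor
        · rintro ⟨h1, h2⟩ (hW | hW)
          · exact Or.inl ((ihφ u).1 h1 hW)
          · exact Or.inr ((ihψ u).1 h2 hW)
        · rintro ⟨h1, h2⟩ (hK | hK)
          · exact Or.inl ((ihφ u).2 h1 hK)
          · exact Or.inr ((ihψ u).2 h2 hK)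
      | and φ ψ ihφ ihψ =>
        intro u
        constructor
        · rintro ⟨h1, h2⟩ ⟨hW1, hW2⟩
          exact ⟨(ihφ u).1 h1 hW1, (ihψ u).1 h2 hW2⟩
        · rintro ⟨h1, h2⟩ ⟨hK1, hK2⟩
          exact ⟨(ihφ u).2 h1 hK1, (ihψ u).2 h2 hK2⟩
      | dia φ ih =>
        intro u
        constructor
        · rintro hop ⟨y, hRy, hyφ⟩
          obtain ⟨v, hmrg, hcylv, hrel⟩ := RAhelp.ex_back F U0 u.2 (hst u.1) hRy
          have hstv : st v = y := RAhelp.st_eq F hd (hst v) hcylv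
          refine ⟨⟨v, hmrg⟩, hrel, ?_⟩
          apply (ih ⟨v, hmrg⟩).1 hop
          show satp F.R _ g φ (st v)
          rw [hstv]
          exact hyφ
        · rintro hcl ⟨v, hrel, hφv⟩
          exact ⟨st v.1, RAhelp.st_forth F ht (hst u.1) (hst v.1) hrel,
            (ih v).2 hcl hφv⟩
      | box φ ih =>
        intro u
        constructor
        · intro hop hW v hrel
          exact (ih v).1 hop (hW (st v.1) (RAhelp.st_forth F ht (hst u.1) (hst v.1) hrel))
        · intro hcl hK y hRy
          obtain ⟨v, hmrg, hcylv, hrel⟩ := RAhelp.ex_back F U0 u.2 (hst u.1) hRy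
          have hstv : st v = y := RAhelp.st_eq F hd (hst v) hcylv
          have := (ih ⟨v, hmrg⟩).2 hcl (hK ⟨v, hmrg⟩ hrel)
          rw [show st (⟨v, hmrg⟩ : Kn).1 = y from hstv] at this
          exact this
      | idia φ ih =>
        intro u
        constructor
        · intro hop
          exact absurd hop (by intro hh; exact hh)
        · rintro hcl ⟨v, hrel, hφv⟩
          exact ⟨st v.1, RAhelp.st_forth F ht (hst v.1) (hst u.1) hrel,
            (ih v).2 hcl hφv⟩
      | ibox φ ih =>
        intro u
        constructor
        · intro hop hW v hrel
          exact (ih v).1 hop (hW (st v.1) (RAhelp.st_forth F ht (hst v.1) (hst u.1) hrel))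
        · intro hcl
          exact absurd hcl (by intro hh; exact hh)
    -- assembly
    let uf : Kn := ⟨U0.map (fun i => ((wit i, i) : W × ι)), by
      intro E hE
      rw [Ultrafilter.mem_map]
      exact hE⟩
    have h1 : satp F.R (Function.update V p {u | satp F.R V g A u}) g B (st uf.1) :=
      Set.eq_univ_iff_forall.mp hBC (st uf.1)
    have h2 : satp Rk Vd gd B uf := (TL B uf).1 hB h1
    have hsubp : Function.update Vd p Gk p ⊆ Vd p := by
      rw [Function.update_self]
      intro u hu
      show st u.1 ∈ Function.update V p {u | satp F.R V g A u} p
      rw [Function.update_self]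
      exact hgen u hu
    have hagree : ∀ q, q ≠ p → Vd q = Function.update Vd p Gk q := by
      intro q hq
      rw [Function.update_of_ne hq]
    have h3 : satp Rk (Function.update Vd p Gk) gd B uf :=
      hBmono Kn Rk Vd (Function.update Vd p Gk) gd hsubp hagree uf h2
    have h4 : fam B ∈ uf.1 := (RL B uf).mp h3
    have h5 : (fun i : ι => ((wit i, i) : W × ι)) ⁻¹' fam B ∈ U0 :=
      Ultrafilter.mem_map.mp h4
    obtain ⟨i, hi⟩ := Ultrafilter.nonempty_of_mem h5
    exact hwit i hi
  · -- right to left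
    rintro ⟨P, hP, hAP, hBP⟩
    apply Set.eq_univ_iff_forall.mpr
    intro w
    have hw : satp F.R (Function.update V p P) g B w := Set.eq_univ_iff_forall.mp hBP w
    refine hBmono W F.R (Function.update V p P)
      (Function.update V p {u | satp F.R V g A u}) g ?_ ?_ w hw
    · rw [Function.update_self, Function.update_self]
      exact hAP
    · intro q hq
      rw [Function.update_of_ne hq, Function.update_of_ne hq]
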